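/- Let 𝐬 = s₁s₂⋯ be a Sturmian word over {0,1} with slope α ∈ (0,1), i.e. lim_{n→∞} |s₁⋯s_n|₁ / n = α. Let φ be a nonerasing monoid morphism from {0,1}* into 𝒜* for a finite alphabet 𝒜, let W be a finite word over 𝒜, and set 𝐚 = W φ(𝐬). Then dio(𝐚) ≥ dio(𝐬). -/

import Mathlib

open Filter

noncomputable section

/-- The `j`-th digit (j ≥ 1) of the base-`b` expansion of the fractional part of `ξ`. -/
def digit (b : ℕ) (ξ : ℝ) (j : ℕ) : ℕ := (⌊Int.fract ξ * (b : ℝ) ^ j⌋ % (b : ℤ)).toNat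

/-- The digit sequence `a₁ a₂ a₃ ⋯` of the base-`b` expansion of `ξ` (index `n` gives `a_{n+1}`). -/
def digitSeq (b : ℕ) (ξ : ℝ) (n : ℕ) : ℕ := digit b ξ (n + 1)

/-- Subword complexity of an infinite word. -/
def wordComplexity {A : Type*} (a : ℕ → A) (n : ℕ) : ℕ :=
  Set.ncard {w : Fin n → A | ∃ j : ℕ, ∀ i : Fin n, w i = a (j + i)}

/-- Subword complexity `p(ξ, b, n)` of the base-`b` expansion of `ξ`. -/
def realComplexity (b : ℕ) (ξ : ℝ) (n : ℕ) : ℕ := wordComplexity (digitSeq b ξ) n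

/-- Exponents `ρ` for which `|ξ - p/q| < q^(-ρ)` has infinitely many rational solutions. -/
def muSet (ξ : ℝ) : Set ℝ :=
  {ρ : ℝ | {r : ℚ | |ξ - (r : ℝ)| < 1 / (r.den : ℝ) ^ ρ}.Infinite}

/-- The irrationality exponent of a real number. -/
def mu (ξ : ℝ) : EReal := sSup ((fun ρ : ℝ => (ρ : EReal)) '' muSet ξ)

/-- Fractional power `V^x` of a finite word. -/
def wordPow {A : Type*} (V : List A) (x : ℝ) : List A :=
  (List.replicate ⌊x⌋₊ V).flatten ++ V.take ⌈(x - (⌊x⌋₊ : ℝ)) * (V.length : ℝ)⌉₊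

/-- The prefix of length `n` of an infinite word. -/
def prefixWord {A : Type*} (a : ℕ → A) (n : ℕ) : List A := (List.range n).map a

/-- `L` is a prefix of the infinite word `a`. -/
def IsPrefixSeq {A : Type*} (a : ℕ → A) (L : List A) : Prop := L = prefixWord a L.length

/-- The set of exponents defining the Diophantine exponent of an infinite word. -/
def dioSet {A : Type*} (a : ℕ → A) : Set ℝ :=
  {ρ : ℝ | ∀ m : ℕ, ∃ (U V : List A) (w : ℝ), V ≠ [] ∧ 0 < w ∧
    m ≤ (U ++ wordPow V w).length ∧ IsPrefixSeq a (U ++ wordPow V w) ∧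
    ρ ≤ ((U ++ wordPow V w).length : ℝ) / ((U ++ V).length : ℝ)}

/-- The Diophantine exponent of an infinite word. -/
def dio {A : Type*} (a : ℕ → A) : EReal := sSup ((fun ρ : ℝ => (ρ : EReal)) '' dioSet a)

/-- The set of exponents defining the initial critical exponent of an infinite word. -/
def iceSet {A : Type*} (a : ℕ → A) : Set ℝ :=
  {ρ : ℝ | 0 < ρ ∧ ∀ m : ℕ, ∃ n : ℕ, m ≤ n ∧ 0 < n ∧
    IsPrefixSeq a (wordPow (prefixWord a n) ρ)}

/-- The initial critical exponent of an infinite word. -/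
def ice {A : Type*} (a : ℕ → A) : EReal := sSup ((fun ρ : ℝ => (ρ : EReal)) '' iceSet a)

/-- An infinite word is eventually periodic. -/
def EventuallyPeriodic {A : Type*} (a : ℕ → A) : Prop :=
  ∃ T : ℕ, 0 < T ∧ ∃ N : ℕ, ∀ n : ℕ, N ≤ n → a (n + T) = a n

/-- A Sturmian word: an infinite binary word of subword complexity `n + 1`. -/
def IsSturmian (s : ℕ → Fin 2) : Prop := ∀ n : ℕ, 1 ≤ n → wordComplexity s n = n + 1

/-- The slope of a binary word: the frequency of the letter `1`. -/
def HasSlope (s : ℕ → Fin 2) (α : ℝ) : Prop :=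
  Tendsto (fun n : ℕ => (((prefixWord s n).count 1 : ℕ) : ℝ) / (n : ℝ)) atTop (nhds α)

/-- The iterated Gauss map orbit: complete quotients of the continued fraction of `ξ`. -/
def cfTail (ξ : ℝ) : ℕ → ℝ
  | 0 => ξ
  | n + 1 => 1 / Int.fract (cfTail ξ n)

/-- The `n`-th partial quotient of the continued fraction expansion of `ξ`. -/
def partialQuotient (ξ : ℝ) (n : ℕ) : ℤ := ⌊cfTail ξ n⌋



section AuxDio

variable {A : Type*}

lemma wordPow_one (V : List A) : wordPow V 1 = V := by
  simp [wordPow]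

lemma prefixWord_length (a : ℕ → A) (n : ℕ) : (prefixWord a n).length = n := by
  simp [prefixWord]

lemma isPrefixSeq_prefixWord (a : ℕ → A) (n : ℕ) :
    IsPrefixSeq a (prefixWord a n) := by
  simp [IsPrefixSeq, prefixWord_length]

lemma prefixWord_take (a : ℕ → A) (n m : ℕ) :
    (prefixWord a n).take m = prefixWord a (min m n) := by
  simp [prefixWord, ← List.map_take, List.take_range]

lemma prefixWord_succ (a : ℕ → A) (n : ℕ) :
    prefixWord a (n + 1) = prefixWord a n ++ [a n] := by
  simp [prefixWord, List.range_succ]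

lemma eq_prefixWord_of_prefix {a : ℕ → A} {n : ℕ} {L : List A}
    (h : L <+: prefixWord a n) : L = prefixWord a L.length := by
  have hlen : L.length ≤ n := by
    have := h.length_le
    rwa [prefixWord_length] at this
  have h2 := List.prefix_iff_eq_take.mp h
  have h3 : L = prefixWord a (min L.length n) := by
    conv_lhs => rw [h2]
    rw [prefixWord_take]
  calc L = prefixWord a (min L.length n) := h3
    _ = prefixWord a L.length := by rw [min_eq_left hlen]

lemma dioSet_trivial (a : ℕ → A) {ρ : ℝ} (hρ : ρ ≤ 1) : ρ ∈ dioSet a := by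
  intro m
  refine ⟨[], prefixWord a (m + 1), 1, ?_, one_pos, ?_, ?_, ?_⟩
  · intro h
    have := congrArg List.length h
    simp [prefixWord_length] at this
  · simp [wordPow_one, prefixWord_length]
  · simpa [wordPow_one] using isPrefixSeq_prefixWord a (m+1)
  · rw [wordPow_one]
    simp only [List.nil_append]
    have : ((prefixWord a (m+1)).length : ℝ) ≠ 0 := by
      simp [prefixWord_length]
      positivity
    rw [div_self this]
    exact hρ

/-- Applying a morphism letterwise. -/
def Phi (φ : Fin 2 → List A) (X : List (Fin 2)) : List A := (X.map φ).flatten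

lemma Phi_append (φ : Fin 2 → List A) (X Y : List (Fin 2)) :
    Phi φ (X ++ Y) = Phi φ X ++ Phi φ Y := by simp [Phi]

lemma Phi_flatten_replicate (φ : Fin 2 → List A) (k : ℕ) (V : List (Fin 2)) :
    Phi φ (List.replicate k V).flatten = (List.replicate k (Phi φ V)).flatten := by
  induction k with
  | zero => simp [Phi]
  | succ k ih =>
      rw [List.replicate_succ, List.replicate_succ, List.flatten_cons, List.flatten_cons,
        Phi_append, ih]

lemma Phi_ne_nil (φ : Fin 2 → List A) (hφ : ∀ i, φ i ≠ []) {X : List (Fin 2)}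
    (hX : X ≠ []) : Phi φ X ≠ [] := by
  cases X with
  | nil => exact absurd rfl hX
  | cons x X =>
      simp [Phi, List.flatten_cons]
      intro h
      exact absurd h (hφ x)

lemma Phi_take_prefix (φ : Fin 2 → List A) (t : ℕ) (V : List (Fin 2)) :
    Phi φ (V.take t) <+: Phi φ V := by
  conv_rhs => rw [← List.take_append_drop t V]
  rw [Phi_append]
  exact List.prefix_append _ _

lemma exists_wordPow_image (φ : Fin 2 → List A) (hφ : ∀ i, φ i ≠ [])
    (V : List (Fin 2)) (hV : V ≠ []) (w : ℝ) (hw : 0 < w) :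
    ∃ w' : ℝ, 0 < w' ∧ Phi φ (wordPow V w) = wordPow (Phi φ V) w' := by
  set k := ⌊w⌋₊ with hk
  set t := ⌈(w - (k : ℝ)) * (V.length : ℝ)⌉₊ with ht
  have hVp : Phi φ V ≠ [] := Phi_ne_nil φ hφ hV
  set L := (Phi φ V).length with hL
  have hL1 : 1 ≤ L := List.length_pos_iff.mpr hVp
  have hLR : (0:ℝ) < L := by exact_mod_cast hL1
  obtain ⟨ℓ, hpref, hℓL⟩ : ∃ ℓ : ℕ, Phi φ (V.take t) = (Phi φ V).take ℓ ∧ ℓ ≤ L := by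
    have hp := Phi_take_prefix φ t V
    exact ⟨(Phi φ (V.take t)).length, List.prefix_iff_eq_take.mp hp, hp.length_le⟩
  have main : Phi φ (wordPow V w) =
      (List.replicate k (Phi φ V)).flatten ++ (Phi φ V).take ℓ := by
    rw [wordPow, Phi_append, Phi_flatten_replicate, hpref]
  have hkℓ : 0 < k ∨ 0 < ℓ := by
    rcases Nat.eq_zero_or_pos k with hk0 | hk0
    · right
      have hlenV : (0:ℝ) < (V.length : ℝ) := by
        exact_mod_cast List.length_pos_iff.mpr hV
      have ht1 : 1 ≤ t := by
        rw [ht]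
        apply Nat.one_le_ceil_iff.mpr
        apply mul_pos _ hlenV
        rw [hk0]
        simpa using hw
      have : V.take t ≠ [] := by
        rw [Ne, List.take_eq_nil_iff]
        push_neg
        exact ⟨by omega, hV⟩
      have := Phi_ne_nil φ hφ this
      rw [hpref] at this
      rcases Nat.eq_zero_or_pos ℓ with h0 | h0
      · simp [h0] at this
      · exact h0
    · left; exact hk0
  by_cases hcase : ℓ = L
  · refine ⟨(k : ℝ) + 1, by positivity, ?_⟩
    rw [main, hcase]
    have : (Phi φ V).take L = Phi φ V := by simp [hL]
    rw [this, wordPow]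
    have hfl : ⌊(k : ℝ) + 1⌋₊ = k + 1 := by
      rw [show ((k:ℝ)+1) = ((k+1:ℕ):ℝ) by push_cast; ring, Nat.floor_natCast]
    rw [hfl]
    have : ((k:ℝ) + 1 - ((k+1 : ℕ):ℝ)) = 0 := by push_cast; ring
    rw [this]
    simp [List.replicate_succ']
  · have hℓlt : ℓ < L := lt_of_le_of_ne hℓL hcase
    refine ⟨(k : ℝ) + (ℓ : ℝ) / (L : ℝ), ?_, ?_⟩
    · rcases hkℓ with h | h
      · have : (0:ℝ) < k := by exact_mod_cast h
        positivity
      · have : (0:ℝ) < (ℓ:ℝ) / L := by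
          apply div_pos _ hLR
          exact_mod_cast h
        positivity
    · rw [main, wordPow]
      have hfrac0 : (0:ℝ) ≤ (ℓ:ℝ)/L := by positivity
      have hfrac1 : (ℓ:ℝ)/L < 1 := by
        rw [div_lt_one hLR]; exact_mod_cast hℓlt
      have hfl : ⌊(k : ℝ) + (ℓ:ℝ)/L⌋₊ = k := by
        rw [add_comm]
        rw [Nat.floor_add_natCast hfrac0, Nat.floor_eq_zero.mpr hfrac1, zero_add]
      rw [hfl]
      have : ((k:ℝ) + (ℓ:ℝ)/L - (k:ℝ)) * (L:ℝ) = (ℓ:ℝ) := by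
        field_simp
        ring
      rw [this, Nat.ceil_natCast]

lemma fin_two_cases (v : Fin 2) : v = 0 ∨ v = 1 := by omega

lemma length_le_Phi_length (φ : Fin 2 → List A) (hφ : ∀ i, φ i ≠ [])
    (X : List (Fin 2)) : X.length ≤ (Phi φ X).length := by
  induction X with
  | nil => simp [Phi]
  | cons x X ih =>
      simp only [Phi, List.map_cons, List.flatten_cons, List.length_append, List.length_cons]
      have : 1 ≤ (φ x).length := List.length_pos_iff.mpr (hφ x)
      simp only [Phi] at ih
      omega

lemma Phi_length_prefix (φ : Fin 2 → List A) (s : ℕ → Fin 2) (n : ℕ) :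
    ((Phi φ (prefixWord s n)).length : ℝ) =
      ((φ 0).length : ℝ) * n +
        (((φ 1).length : ℝ) - ((φ 0).length : ℝ)) * ((prefixWord s n).count 1 : ℝ) := by
  induction n with
  | zero => simp [Phi, prefixWord]
  | succ n ih =>
      rw [prefixWord_succ]
      have hlen : (Phi φ (prefixWord s n ++ [s n])).length
          = (Phi φ (prefixWord s n)).length + (φ (s n)).length := by
        simp [Phi]
      rcases fin_two_cases (s n) with h | h
      · have hcount : (prefixWord s n ++ [s n]).count 1 = (prefixWord s n).count 1 := by
          simp [List.count_append, h]
        rw [hlen, hcount, h]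
        push_cast
        rw [ih]
        ring
      · have hcount : (prefixWord s n ++ [s n]).count 1 = (prefixWord s n).count 1 + 1 := by
          simp [List.count_append, h]
        rw [hlen, hcount, h]
        push_cast
        rw [ih]
        ring

lemma key_quant (h : ℕ → ℝ) (c : ℝ) (hc : 0 < c) (hnonneg : ∀ n, 0 ≤ h n)
    (hlim : Tendsto (fun n => h n / (n : ℝ)) atTop (nhds c)) (ρ ρ' : ℝ)
    (hρ' : 1 < ρ') (hlt : ρ' < ρ) :
    ∃ N : ℕ, ∀ n m : ℕ, N ≤ n → 1 ≤ m → ρ * m ≤ (n : ℝ) → ρ' * h m ≤ h n := by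
  have hρpos : 0 < ρ := by linarith
  have hρ'pos : 0 < ρ' := by linarith
  set δ : ℝ := c * (ρ - ρ') / (ρ + ρ') with hδdef
  have hδpos : 0 < δ := by
    apply div_pos (mul_pos hc (by linarith)) (by linarith)
  have hδlt : δ < c := by
    rw [hδdef, div_lt_iff₀ (by linarith : (0:ℝ) < ρ + ρ')]
    nlinarith
  obtain ⟨N0, hN0⟩ := (Metric.tendsto_atTop.mp hlim) δ hδpos
  set N1 : ℕ := max N0 1 with hN1def
  have hbound : ∀ n : ℕ, N1 ≤ n → (c - δ) * n ≤ h n ∧ h n ≤ (c + δ) * n := by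
    intro n hn
    have hn1 : 1 ≤ n := le_trans (le_max_right _ _) hn
    have hnR : (0:ℝ) < n := by exact_mod_cast hn1
    have := hN0 n (le_trans (le_max_left _ _) hn)
    rw [Real.dist_eq, abs_lt] at this
    constructor
    · rw [← le_div_iff₀ hnR]
      linarith [this.1]
    · rw [← div_le_iff₀ hnR]
      linarith [this.2]
  set B : ℝ := (Finset.range N1).sum (fun i => h i) + 1 with hBdef
  have hB : ∀ m : ℕ, m < N1 → h m ≤ B := by
    intro m hm
    have h1 : h m ≤ (Finset.range N1).sum (fun i => h i) :=
      Finset.single_le_sum (fun i _ => hnonneg i) (Finset.mem_range.mpr hm)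
    linarith
  set N : ℕ := max N1 ⌈ρ' * B / (c - δ)⌉₊ with hNdef
  refine ⟨N, fun n m hn hm hρm => ?_⟩
  have hnN1 : N1 ≤ n := le_trans (le_max_left _ _) hn
  have hhn : (c - δ) * n ≤ h n := (hbound n hnN1).1
  by_cases hcase : N1 ≤ m
  · have hhm : h m ≤ (c + δ) * m := (hbound m hcase).2
    have hmR : (0:ℝ) < m := by exact_mod_cast hm
    have key : (c - δ) * ρ = ρ' * (c + δ) := by
      rw [hδdef]
      field_simp
      ring
    calc ρ' * h m ≤ ρ' * ((c + δ) * m) := by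
          apply mul_le_mul_of_nonneg_left hhm (le_of_lt hρ'pos)
      _ = ((c - δ) * ρ) * m := by rw [key]; ring
      _ = (c - δ) * (ρ * m) := by ring
      _ ≤ (c - δ) * n := by
          apply mul_le_mul_of_nonneg_left hρm (by linarith)
      _ ≤ h n := hhn
  · push_neg at hcase
    have hhm : h m ≤ B := hB m hcase
    have hceil : (ρ' * B / (c - δ)) ≤ (⌈ρ' * B / (c - δ)⌉₊ : ℝ) := Nat.le_ceil _
    have hnge : (⌈ρ' * B / (c - δ)⌉₊ : ℝ) ≤ (n : ℝ) := by
      exact_mod_cast le_trans (le_max_right N1 _) hn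
    have h2 : ρ' * B ≤ (c - δ) * n := by
      rw [div_le_iff₀ (by linarith : (0:ℝ) < c - δ)] at hceil
      calc ρ' * B ≤ (⌈ρ' * B / (c - δ)⌉₊ : ℝ) * (c - δ) := hceil
        _ ≤ (n:ℝ) * (c - δ) := by
            apply mul_le_mul_of_nonneg_right hnge (by linarith)
        _ = (c - δ) * n := by ring
    calc ρ' * h m ≤ ρ' * B := mul_le_mul_of_nonneg_left hhm (le_of_lt hρ'pos)
      _ ≤ (c - δ) * n := h2
      _ ≤ h n := hhn

end AuxDio

/-- If `𝐚 = W φ(𝐬)` for a Sturmian word `𝐬` with slope `α`, a nonerasing morphism `φ`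
and a finite word `W`, then `dio(𝐚) ≥ dio(𝐬)`. -/
theorem dio_ge_of_sturmian_morphic_image {A : Type*} [Fintype A] (s : ℕ → Fin 2)
    (hs : IsSturmian s) (α : ℝ) (hα : α ∈ Set.Ioo (0 : ℝ) 1) (hslope : HasSlope s α)
    (φ : Fin 2 → List A) (hφ : ∀ i : Fin 2, φ i ≠ []) (W : List A) (a : ℕ → A)
    (ha : ∀ n : ℕ, IsPrefixSeq a (W ++ ((prefixWord s n).map φ).flatten)) :
    dio s ≤ dio a := by
  classical
  obtain ⟨hα0, hα1⟩ := hα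
  -- basic abbreviations
  set c0 : ℝ := ((φ 0).length : ℝ) with hc0def
  set c1 : ℝ := ((φ 1).length : ℝ) with hc1def
  have hc01 : 1 ≤ c0 := by
    rw [hc0def]
    exact_mod_cast List.length_pos_iff.mpr (hφ 0)
  have hc11 : 1 ≤ c1 := by
    rw [hc1def]
    exact_mod_cast List.length_pos_iff.mpr (hφ 1)
  set c : ℝ := c0 + (c1 - c0) * α with hcdef
  have hcpos : 0 < c := by nlinarith
  -- the length function
  set f : ℕ → ℕ := fun n => (Phi φ (prefixWord s n)).length with hfdef
  set h : ℕ → ℝ := fun n => (W.length : ℝ) + (f n : ℝ) with hhdef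
  have hf_formula : ∀ n : ℕ, (f n : ℝ) = c0 * n + (c1 - c0) * ((prefixWord s n).count 1 : ℝ) :=
    fun n => Phi_length_prefix φ s n
  have hf_ge : ∀ n : ℕ, n ≤ f n := by
    intro n
    have := length_le_Phi_length φ hφ (prefixWord s n)
    rwa [prefixWord_length] at this
  have hnonneg : ∀ n, 0 ≤ h n := by
    intro n
    rw [hhdef]
    positivity
  -- the limit
  have hlim : Tendsto (fun n => h n / (n : ℝ)) atTop (nhds c) := by
    have h1 : Tendsto (fun n : ℕ => (W.length : ℝ) / n + (c0 + (c1 - c0) *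
        (((prefixWord s n).count 1 : ℝ) / n))) atTop (nhds (0 + (c0 + (c1 - c0) * α))) := by
      apply Tendsto.add
      · exact tendsto_const_div_atTop_nhds_zero_nat _
      · apply Tendsto.const_add
        exact Tendsto.const_mul _ hslope
    have h2 : (0 : ℝ) + (c0 + (c1 - c0) * α) = c := by rw [hcdef]; ring
    rw [h2] at h1
    apply h1.congr'
    filter_upwards [eventually_ge_atTop 1] with n hn
    have hnR : ((n : ℝ)) ≠ 0 := by positivity
    rw [hhdef]
    simp only
    rw [hf_formula n]
    field_simp
    try ring
  -- membership transfer
  have hmem : ∀ ρ ∈ dioSet s, ∀ ρ' : ℝ, 1 < ρ' → ρ' < ρ → ρ' ∈ dioSet a := by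
    intro ρ hρs ρ' hρ'1 hρ'ρ
    obtain ⟨N, hN⟩ := key_quant h c hcpos hnonneg hlim ρ ρ' hρ'1 hρ'ρ
    intro m₀
    obtain ⟨U, V, w, hV, hw, hlen, hpre, hratio⟩ := hρs (max m₀ N)
    set n : ℕ := (U ++ wordPow V w).length with hndef
    set m : ℕ := (U ++ V).length with hmdef
    have hm1 : 1 ≤ m := by
      rw [hmdef]
      simp only [List.length_append]
      have : 1 ≤ V.length := List.length_pos_iff.mpr hV
      omega
    have hmR : (0:ℝ) < m := by exact_mod_cast hm1
    have hρm : ρ * m ≤ (n : ℝ) := by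
      rw [← le_div_iff₀ hmR]
      exact hratio
    have hρ1 : 1 < ρ := lt_trans hρ'1 hρ'ρ
    have hnm : (m : ℝ) < n := by nlinarith
    have hnmN : m < n := by exact_mod_cast hnm
    -- w has floor at least 1
    have hk1 : 1 ≤ ⌊w⌋₊ := by
      by_contra hcon
      have hk0 : ⌊w⌋₊ = 0 := by omega
      have : n ≤ U.length + V.length := by
        rw [hndef, List.length_append, wordPow, hk0]
        simp
      rw [hmdef, List.length_append] at hnmN
      omega
    -- U ++ V is a prefix of s
    have hprefn : U ++ wordPow V w = prefixWord s n := hpre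
    have hUV_pref : (U ++ V) <+: (U ++ wordPow V w) := by
      obtain ⟨k', hk'⟩ : ∃ k', ⌊w⌋₊ = k' + 1 := ⟨⌊w⌋₊ - 1, by omega⟩
      refine ⟨(List.replicate k' V).flatten ++
        V.take ⌈(w - (⌊w⌋₊ : ℝ)) * (V.length : ℝ)⌉₊, ?_⟩
      rw [wordPow, hk', List.replicate_succ, List.flatten_cons]
      simp [List.append_assoc]
    have hUV : U ++ V = prefixWord s m := by
      rw [hmdef]
      exact eq_prefixWord_of_prefix (hprefn ▸ hUV_pref)
    -- construct the witness in a
    obtain ⟨w', hw', himg⟩ := exists_wordPow_image φ hφ V hV w hw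
    refine ⟨W ++ Phi φ U, Phi φ V, w', Phi_ne_nil φ hφ hV, hw', ?_, ?_, ?_⟩
    all_goals {
      have hword : (W ++ Phi φ U) ++ wordPow (Phi φ V) w'
          = W ++ Phi φ (prefixWord s n) := by
        rw [← himg, List.append_assoc, ← Phi_append, hprefn]
      have hlenn : ((W ++ Phi φ U) ++ wordPow (Phi φ V) w').length = W.length + f n := by
        rw [hword]
        simp [hfdef]
      have hlenm : ((W ++ Phi φ U) ++ Phi φ V).length = W.length + f m := by
        have : f m = (Phi φ U).length + (Phi φ V).length := by
          rw [hfdef]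
          simp only
          rw [← hUV, Phi_append, List.length_append]
        rw [List.length_append, List.length_append, this]
        omega
      have hnbig : max m₀ N ≤ n := le_trans hlen le_rfl
      first
      | -- goal 1 : m₀ ≤ length
        (rw [hlenn]
         have : n ≤ f n := hf_ge n
         have : m₀ ≤ n := le_trans (le_max_left _ _) hnbig
         omega)
      | -- goal 2 : IsPrefixSeq
        (rw [hword]
         exact ha n)
      | -- goal 3 : ratio
        (rw [hlenn, hlenm]
         have hkey : ρ' * h m ≤ h n := hN n m (le_trans (le_max_right _ _) hnbig) hm1 hρm
         have e1 : ((W.length + f n : ℕ) : ℝ) = h n := by rw [hhdef]; push_cast; ring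
         have e2 : ((W.length + f m : ℕ) : ℝ) = h m := by rw [hhdef]; push_cast; ring
         have hhm_pos : (0:ℝ) < ((W.length + f m : ℕ) : ℝ) := by
           have h1 : 1 ≤ W.length + f m := by have := hf_ge m; omega
           exact_mod_cast h1
         rw [le_div_iff₀ hhm_pos, e1, e2]
         exact hkey)
    }
  -- conclude via suprema
  have hle : ∀ r : ℝ, r ∈ dioSet a → (r : EReal) ≤ dio a := by
    intro r hr
    exact le_sSup ⟨r, hr, rfl⟩
  have h1a : ((1:ℝ) : EReal) ≤ dio a := hle 1 (dioSet_trivial a le_rfl)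
  rw [dio]
  apply sSup_le
  rintro x ⟨ρ, hρ, rfl⟩
  by_cases hρ1 : ρ ≤ 1
  · exact hle ρ (dioSet_trivial a hρ1)
  · push_neg at hρ1
    by_contra hcon
    push_neg at hcon
    have hbot : dio a ≠ ⊥ := by
      intro hb
      rw [hb, le_bot_iff] at h1a
      exact EReal.coe_ne_bot 1 h1a
    have htop : dio a ≠ ⊤ := by
      intro ht
      rw [ht] at hcon
      exact not_top_lt hcon
    set t : ℝ := (dio a).toReal with htdef
    have hcoe : dio a = (t : EReal) := (EReal.coe_toReal htop hbot).symm
    rw [hcoe] at hcon h1a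
    have ht1 : (1:ℝ) ≤ t := by exact_mod_cast h1a
    have htρ : t < ρ := by exact_mod_cast hcon
    set r : ℝ := (t + ρ) / 2 with hrdef
    have hr1 : 1 < r := by rw [hrdef]; linarith
    have hrρ : r < ρ := by rw [hrdef]; linarith
    have htr : t < r := by rw [hrdef]; linarith
    have : (r : EReal) ≤ (t : EReal) := by
      rw [← hcoe]
      exact hle r (hmem ρ hρ r hr1 hrρ)
    have : r ≤ t := by exact_mod_cast this
    linarith

end
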